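/- Let Π be a WALT deduction of Γ;Δ;E ⊢ M:B whose subject M is a value. (1) If B = !A for some A, then the last rule of Π is the rule !, and FV(M) ⊆ dom(E). (2) If B = $A for some A, then the last rule of Π is the rule $ or the contraction C, and FV(M) ⊆ dom(Δ) ∪ dom(E). -/

import Mathlib

set_option maxHeartbeats 1000000
/-
A formalization of the syntax of Weak Affine Light Typing (WALT),
following L. Roversi, "Weak Affine Light Typing: Polytime intensional
expressivity, soundness and completeness".

* `Term`  : pure λ-terms with named variables,
* `Ty`    : WALT formulae  A ::= L | !A | $A ,  L ::= α | A⊸A | $A⊸ᵉA | ∀α.L,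
* `Deduction Γ Δ E M A` : the deductions of the judgment Γ;Δ;E ⊢ M:A of Fig. 1,
* measures `depth`, `psz` (partial size) and `width` of a deduction,
* the rewriting relation `Step` (⊳) and its depth-indexed version `StepAt`,
* rounds and canonical strategies.
-/

namespace WALT

/-! ### Types -/

inductive Ty : Type where
  | tvar : ℕ → Ty
  | arr  : Ty → Ty → Ty          -- A ⊸ B
  | earr : Ty → Ty → Ty          -- `earr A B` stands for  $A ⊸ᵉ B
  | bang : Ty → Ty               -- !A
  | par  : Ty → Ty               -- $A
  | all  : ℕ → Ty → Ty           -- ∀α.L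
  deriving DecidableEq

/-- Linear (non-modal) formulae `L`. -/
def Ty.Linear : Ty → Prop
  | .tvar _ => True
  | .arr _ _ => True
  | .earr _ _ => True
  | .bang _ => False
  | .par _ => False
  | .all _ L => L.Linear

/-- Free type variables. -/
def Ty.ftv : Ty → Finset ℕ
  | .tvar a => {a}
  | .arr A B => A.ftv ∪ B.ftv
  | .earr A B => A.ftv ∪ B.ftv
  | .bang A => A.ftv
  | .par A => A.ftv
  | .all a L => L.ftv.erase a

/-- Substitution of a type for a type variable. -/
def Ty.tsubst : Ty → ℕ → Ty → Ty
  | .tvar b, a, L => if b = a then L else .tvar b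
  | .arr B C, a, L => .arr (B.tsubst a L) (C.tsubst a L)
  | .earr B C, a, L => .earr (B.tsubst a L) (C.tsubst a L)
  | .bang B, a, L => .bang (B.tsubst a L)
  | .par B, a, L => .par (B.tsubst a L)
  | .all b L', a, L => if b = a then .all b L' else .all b (L'.tsubst a L)

/-! ### λ-terms -/

inductive Term : Type where
  | var : ℕ → Term
  | lam : ℕ → Term → Term
  | app : Term → Term → Term
  deriving DecidableEq

/-- Free variables. -/
def Term.FV : Term → Finset ℕ
  | .var y => {y}
  | .lam y M => M.FV.erase y
  | .app M N => M.FV ∪ N.FV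

/-- `noOcc x M` = number of free occurrences of `x` in `M`. -/
def Term.noOcc (x : ℕ) : Term → ℕ
  | .var y => if y = x then 1 else 0
  | .lam y M => if y = x then 0 else M.noOcc x
  | .app M N => M.noOcc x + N.noOcc x

/-- Size of a term. -/
def Term.size : Term → ℕ
  | .var _ => 1
  | .lam _ M => M.size + 1
  | .app M N => M.size + N.size + 1

/-- (Capture-free) substitution `M[N/x]`. -/
def Term.subst : Term → ℕ → Term → Term
  | .var y, x, N => if y = x then N else .var y
  | .lam y M, x, N => if y = x then .lam y M else .lam y (M.subst x N)
  | .app M P, x, N => .app (M.subst x N) (P.subst x N)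

/-- Values: variables and abstractions. -/
def Term.IsValue : Term → Prop
  | .app _ _ => False
  | _ => True

/-! ### Contexts -/

/-- A set of type assignments (used for Γ, Δ, Θ, Φ). -/
abbrev Ctx : Type := Finset (ℕ × Ty)

/-- A set of partially discharged contexts, i.e. of pairs (Θ;Φ). -/
abbrev PCtx : Type := Finset (Ctx × Ctx)

/-- Domain of a set of type assignments. -/
def dom (Γ : Ctx) : Finset ℕ := Γ.image Prod.fst

/-- Domain of a set of partially discharged contexts. -/
def domE (E : PCtx) : Finset ℕ := E.biUnion fun p => dom p.1 ∪ dom p.2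

/-- `$Γ` : prefix every type in `Γ` with the modality `$`. -/
def parc (Γ : Ctx) : Ctx := Γ.image fun p => (p.1, Ty.par p.2)

/-- The merge `E ⊔ F` of partially discharged contexts: pairs sharing the same
polynomial part `Φ` get their elementary parts united. -/
def pmerge (E F : PCtx) : PCtx :=
  ((E ×ˢ F).filter (fun p => p.1.2 = p.2.2)).image
      (fun p => (p.1.1 ∪ p.2.1, p.1.2)) ∪
    E.filter (fun p => ∀ q ∈ F, q.2 ≠ p.2) ∪
    F.filter (fun q => ∀ p ∈ E, p.2 ≠ q.2)

/-! ### The type assignment system of Fig. 1 -/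

inductive Deduction : Ctx → Ctx → PCtx → Term → Ty → Type where
  /-- rule A -/
  | ax {Γ Δ : Ctx} {E : PCtx} {x : ℕ} {L : Ty} (hL : L.Linear) :
      Deduction (insert (x, L) Γ) Δ E (.var x) L
  /-- rule C -/
  | contr {Γ Δ : Ctx} {E : PCtx} {Θx Θy : Ctx} {x y z : ℕ} {A : Ty} {M : Term} {B : Ty}
      (h1 : (Θx, ({(x, A)} : Ctx)) ∉ insert (Θy, ({(y, A)} : Ctx)) E)
      (h2 : (Θy, ({(y, A)} : Ctx)) ∉ E)
      (prem : Deduction Γ Δ (insert (Θx, {(x, A)}) (insert (Θy, {(y, A)}) E)) M B) :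
      Deduction Γ Δ (pmerge E {(Θx ∪ Θy, {(z, A)})})
        ((M.subst x (.var z)).subst y (.var z)) B
  /-- rule ⊸I -/
  | arrI {Γ Δ : Ctx} {E : PCtx} {x : ℕ} {L : Ty} {M : Term} {B : Ty}
      (hL : L.Linear) (hx : x ∉ dom Γ)
      (prem : Deduction (insert (x, L) Γ) Δ E M B) :
      Deduction Γ Δ E (.lam x M) (.arr L B)
  /-- rule ⊸I_$ -/
  | arrIPar {Γ Δ : Ctx} {E : PCtx} {x : ℕ} {A : Ty} {M : Term} {B : Ty}
      (hx : x ∉ dom Δ)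
      (prem : Deduction Γ (insert (x, A) Δ) E M B) :
      Deduction Γ Δ E (.lam x M) (.arr (.par A) B)
  /-- rule ⊸E -/
  | arrE {ΓM ΔM ΓN ΔN : Ctx} {EM EN : PCtx} {M N : Term} {A B : Ty}
      (hA : ∀ C, A ≠ Ty.bang C)
      (hΓ : Disjoint (dom ΓM) (dom ΓN)) (hΔ : Disjoint (dom ΔM) (dom ΔN))
      (d1 : Deduction ΓM ΔM EM M (.arr A B)) (d2 : Deduction ΓN ΔN EN N A) :
      Deduction (ΓM ∪ ΓN) (ΔM ∪ ΔN) (pmerge EM EN) (.app M N) B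
  /-- rule ⊸I_! -/
  | arrIBang {Γ Δ : Ctx} {E : PCtx} {Θ : Ctx} {x : ℕ} {A : Ty} {M : Term} {B : Ty}
      (hmem : (Θ, ({(x, A)} : Ctx)) ∉ E)
      (prem : Deduction Γ Δ (insert (Θ, {(x, A)}) E) M B) :
      Deduction Γ Δ (pmerge E {(Θ, ∅)}) (.lam x M) (.arr (.bang A) B)
  /-- rule ⊸E_! -/
  | arrEBang {ΓM ΔM ΓN ΔN : Ctx} {EM EN : PCtx} {M N : Term} {A B : Ty}
      (hEM : ∀ p ∈ EM, p.1 = (∅ : Ctx))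
      (hΓ : Disjoint (dom ΓM) (dom ΓN)) (hΔ : Disjoint (dom ΔM) (dom ΔN))
      (d1 : Deduction ΓM ΔM EM M (.arr (.bang A) B)) (d2 : Deduction ΓN ΔN EN N (.bang A)) :
      Deduction (ΓM ∪ ΓN) (ΔM ∪ ΔN) (pmerge EM EN) (.app M N) B
  /-- rule ⊸ᵉI -/
  | earrI {Γ Δ : Ctx} {E : PCtx} {Θ : Ctx} {x : ℕ} {A : Ty} {M : Term} {B : Ty}
      (hmem : (insert (x, A) Θ, (∅ : Ctx)) ∉ E)
      (prem : Deduction Γ Δ (insert (insert (x, A) Θ, (∅ : Ctx)) E) M B) :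
      Deduction Γ Δ (pmerge E {(Θ, ∅)}) (.lam x M) (.earr A B)
  /-- rule ⊸ᵉE -/
  | earrE {ΓM Δ : Ctx} {EM EN : PCtx} {Θ : Ctx} {M N : Term} {A B : Ty}
      (hEN : EN ⊆ {(Θ, (∅ : Ctx))})
      (d1 : Deduction ΓM Δ EM M (.earr A B)) (d2 : Deduction ∅ ∅ EN N (.par A)) :
      Deduction ΓM Δ (pmerge EM EN) (.app M N) B
  /-- rule $ -/
  | box {Γ Γ' Δ Δ' Θ' : Ctx} {E₂ : PCtx} {M : Term} {B : Ty}
      (hcov : Γ ⊆ Δ ∪ E₂.biUnion (fun p => p.1 ∪ p.2))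
      (hE₂ : ∀ p ∈ E₂, (p.1 ≠ (∅ : Ctx) ↔ p.2 = (∅ : Ctx)))
      (hΦ : ∀ p ∈ E₂, p.2.card ≤ 1)
      (prem : Deduction Γ Δ' {(Θ', (∅ : Ctx))} M B) :
      Deduction Γ' (parc Δ' ∪ Δ) (pmerge {(parc Θ', ∅)} E₂) M (.par B)
  /-- rule ! -/
  | bang {Γ Γ' Δ Θ' Θ Φ : Ctx} {M : Term} {B : Ty}
      (hcov : Γ ⊆ Θ ∪ Φ) (hΦ : Φ.card ≤ 1)
      (hpoly : Θ ≠ ∅ → (dom Φ ∩ M.FV).Nonempty)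
      (prem : Deduction Γ ∅ {(Θ', (∅ : Ctx))} M B) :
      Deduction Γ' Δ (pmerge {(parc Θ', ∅)} {(Θ, Φ)}) M (.bang B)
  /-- rule ∀I -/
  | allI {Γ Δ : Ctx} {E : PCtx} {M : Term} {L : Ty} {a : ℕ}
      (hL : L.Linear)
      (hfresh : (∀ p ∈ Γ, a ∉ Ty.ftv p.2) ∧ (∀ p ∈ Δ, a ∉ Ty.ftv p.2) ∧
        ∀ q ∈ E, (∀ p ∈ q.1, a ∉ Ty.ftv p.2) ∧ (∀ p ∈ q.2, a ∉ Ty.ftv p.2))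
      (prem : Deduction Γ Δ E M L) :
      Deduction Γ Δ E M (.all a L)
  /-- rule ∀E -/
  | allE {Γ Δ : Ctx} {E : PCtx} {M : Term} {a : ℕ} {L : Ty}
      (L' : Ty) (hL' : L'.Linear)
      (prem : Deduction Γ Δ E M (.all a L)) :
      Deduction Γ Δ E M (Ty.tsubst L a L')

/-! ### Measures of deductions -/

/-- Depth (level) of a deduction: maximal nesting of the rules `!` and `$`. -/
def depth : {Γ Δ : Ctx} → {E : PCtx} → {M : Term} → {A : Ty} →
    Deduction Γ Δ E M A → ℕ
  | _, _, _, _, _, .ax _ => 0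
  | _, _, _, _, _, .contr _ _ d => depth d
  | _, _, _, _, _, .arrI _ _ d => depth d
  | _, _, _, _, _, .arrIPar _ d => depth d
  | _, _, _, _, _, .arrE _ _ _ d1 d2 => max (depth d1) (depth d2)
  | _, _, _, _, _, .arrIBang _ d => depth d
  | _, _, _, _, _, .arrEBang _ _ _ d1 d2 => max (depth d1) (depth d2)
  | _, _, _, _, _, .earrI _ d => depth d
  | _, _, _, _, _, .earrE _ d1 d2 => max (depth d1) (depth d2)
  | _, _, _, _, _, .box _ _ _ d => depth d + 1
  | _, _, _, _, _, .bang _ _ _ d => depth d + 1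
  | _, _, _, _, _, .allI _ _ d => depth d
  | _, _, _, _, _, .allE _ _ d => depth d

/-- Partial size `‖Π‖_n` of a deduction at depth `n`. -/
def psz : ℕ → {Γ Δ : Ctx} → {E : PCtx} → {M : Term} → {A : Ty} →
    Deduction Γ Δ E M A → ℕ
  | n, _, _, _, _, _, .ax _ => if n = 0 then 1 else 0
  | n, _, _, _, _, _, .contr _ _ d => if n = 0 then psz 0 d else psz n d + 1
  | n, _, _, _, _, _, .arrI _ _ d => if n = 0 then psz 0 d + 1 else psz n d
  | n, _, _, _, _, _, .arrIPar _ d => if n = 0 then psz 0 d + 1 else psz n d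
  | n, _, _, _, _, _, .arrE _ _ _ d1 d2 => psz n d1 + psz n d2 + 1
  | n, _, _, _, _, _, .arrIBang _ d => if n = 0 then psz 0 d + 1 else psz n d
  | n, _, _, _, _, _, .arrEBang _ _ _ d1 d2 => psz n d1 + psz n d2 + 1
  | n, _, _, _, _, _, .earrI _ d => if n = 0 then psz 0 d + 1 else psz n d
  | n, _, _, _, _, _, .earrE _ d1 d2 => psz n d1 + psz n d2 + 1
  | n, _, _, _, _, _, .box _ _ _ d => if n = 0 then 0 else psz (n - 1) d
  | n, _, _, _, _, _, .bang _ _ _ d => if n = 0 then 0 else psz (n - 1) d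
  | n, _, _, _, _, _, .allI _ _ d => psz n d
  | n, _, _, _, _, _, .allE _ _ d => psz n d

/-- Width `w_n(Π)` of a deduction at depth `n`. -/
def width : ℕ → {Γ Δ : Ctx} → {E : PCtx} → {M : Term} → {A : Ty} →
    Deduction Γ Δ E M A → ℕ
  | _, _, _, _, _, _, .ax _ => 0
  | n, _, _, _, _, _, .contr _ _ d =>
      if n = 0 then 0 else if n = 1 then width 1 d + 1 else width n d
  | n, _, _, _, _, _, .arrI _ _ d => if n = 0 then 0 else width n d
  | n, _, _, _, _, _, .arrIPar _ d => if n = 0 then 0 else width n d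
  | n, _, _, _, _, _, .arrE _ _ _ d1 d2 =>
      if n = 0 then 0 else if n = 1 then width 1 d1 + width 1 d2 + 1
      else width n d1 + width n d2
  | n, _, _, _, _, _, .arrIBang _ d => if n = 0 then 0 else width n d
  | n, _, _, _, _, _, .arrEBang _ _ _ d1 d2 =>
      if n = 0 then 0 else if n = 1 then width 1 d1 + width 1 d2 + 1
      else width n d1 + width n d2
  | n, _, _, _, _, _, .earrI _ d => if n = 0 then 0 else width n d
  | n, _, _, _, _, _, .earrE _ d1 d2 =>
      if n = 0 then 0 else if n = 1 then width 1 d1 + width 1 d2 + 1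
      else width n d1 + width n d2
  | n, _, _, _, _, _, .box _ _ _ d => if n = 0 then 0 else width (n - 1) d
  | n, _, _, _, _, _, .bang _ _ _ d => if n = 0 then 0 else width (n - 1) d
  | n, _, _, _, _, _, .allI _ _ d => if n = 0 then 0 else width n d
  | n, _, _, _, _, _, .allE _ _ d => if n = 0 then 0 else width n d

/-- Number of instances of the rules C, ⊸E, ⊸E_!, ⊸ᵉE in a deduction. -/
def ccount : {Γ Δ : Ctx} → {E : PCtx} → {M : Term} → {A : Ty} →
    Deduction Γ Δ E M A → ℕ
  | _, _, _, _, _, .ax _ => 0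
  | _, _, _, _, _, .contr _ _ d => ccount d + 1
  | _, _, _, _, _, .arrI _ _ d => ccount d
  | _, _, _, _, _, .arrIPar _ d => ccount d
  | _, _, _, _, _, .arrE _ _ _ d1 d2 => ccount d1 + ccount d2 + 1
  | _, _, _, _, _, .arrIBang _ d => ccount d
  | _, _, _, _, _, .arrEBang _ _ _ d1 d2 => ccount d1 + ccount d2 + 1
  | _, _, _, _, _, .earrI _ d => ccount d
  | _, _, _, _, _, .earrE _ d1 d2 => ccount d1 + ccount d2 + 1
  | _, _, _, _, _, .box _ _ _ d => ccount d
  | _, _, _, _, _, .bang _ _ _ d => ccount d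
  | _, _, _, _, _, .allI _ _ d => ccount d
  | _, _, _, _, _, .allE _ _ d => ccount d

/-! ### Last rule of a deduction -/

def endsInAx : {Γ Δ : Ctx} → {E : PCtx} → {M : Term} → {A : Ty} →
    Deduction Γ Δ E M A → Prop
  | _, _, _, _, _, .ax _ => True
  | _, _, _, _, _, _ => False

def endsInContr : {Γ Δ : Ctx} → {E : PCtx} → {M : Term} → {A : Ty} →
    Deduction Γ Δ E M A → Prop
  | _, _, _, _, _, .contr _ _ _ => True
  | _, _, _, _, _, _ => False

def endsInBang : {Γ Δ : Ctx} → {E : PCtx} → {M : Term} → {A : Ty} →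
    Deduction Γ Δ E M A → Prop
  | _, _, _, _, _, .bang _ _ _ _ => True
  | _, _, _, _, _, _ => False

def endsInPar : {Γ Δ : Ctx} → {E : PCtx} → {M : Term} → {A : Ty} →
    Deduction Γ Δ E M A → Prop
  | _, _, _, _, _, .box _ _ _ _ => True
  | _, _, _, _, _, _ => False

/-! ### Packaged deductions and subdeductions -/

/-- A deduction together with its conclusion judgment. -/
structure Ded : Type where
  Γ : Ctx
  Δ : Ctx
  E : PCtx
  M : Term
  A : Ty
  ded : Deduction Γ Δ E M A

def Ded.depth (D : Ded) : ℕ := WALT.depth D.ded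

/-- Total size of a deduction: the sum of its partial sizes. -/
def Ded.dsize (D : Ded) : ℕ := ∑ i ∈ Finset.range (D.depth + 1), psz i D.ded

/-- Immediate subdeductions. -/
def children : {Γ Δ : Ctx} → {E : PCtx} → {M : Term} → {A : Ty} →
    Deduction Γ Δ E M A → List Ded
  | _, _, _, _, _, .ax _ => []
  | _, _, _, _, _, .contr _ _ d => [Ded.mk _ _ _ _ _ d]
  | _, _, _, _, _, .arrI _ _ d => [Ded.mk _ _ _ _ _ d]
  | _, _, _, _, _, .arrIPar _ d => [Ded.mk _ _ _ _ _ d]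
  | _, _, _, _, _, .arrE _ _ _ d1 d2 => [Ded.mk _ _ _ _ _ d1, Ded.mk _ _ _ _ _ d2]
  | _, _, _, _, _, .arrIBang _ d => [Ded.mk _ _ _ _ _ d]
  | _, _, _, _, _, .arrEBang _ _ _ d1 d2 => [Ded.mk _ _ _ _ _ d1, Ded.mk _ _ _ _ _ d2]
  | _, _, _, _, _, .earrI _ d => [Ded.mk _ _ _ _ _ d]
  | _, _, _, _, _, .earrE _ d1 d2 => [Ded.mk _ _ _ _ _ d1, Ded.mk _ _ _ _ _ d2]
  | _, _, _, _, _, .box _ _ _ d => [Ded.mk _ _ _ _ _ d]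
  | _, _, _, _, _, .bang _ _ _ d => [Ded.mk _ _ _ _ _ d]
  | _, _, _, _, _, .allI _ _ d => [Ded.mk _ _ _ _ _ d]
  | _, _, _, _, _, .allE _ _ d => [Ded.mk _ _ _ _ _ d]

/-- `Sub P D` : `P` is a subdeduction of `D`. -/
def Sub (P D : Ded) : Prop :=
  Relation.ReflTransGen (fun a b => a ∈ children b.ded) P D

/-! ### The rewriting relation ⊳ -/

/-- Side conditions under which the redex `(λx.P)Q` may be contracted. -/
def BetaOk (x : ℕ) (P Q : Term) : Prop :=
  P.noOcc x = 0 ∨ (P.noOcc x = 1 ∧ Q.IsValue) ∨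
    (1 < P.noOcc x ∧ Q.IsValue ∧ ∃ y, Q.FV ⊆ {y})

/-- The rewriting relation ⊳ : contextual closure of the conditional β-rule. -/
inductive Step : Term → Term → Prop where
  | beta {x : ℕ} {P Q : Term} (h : BetaOk x P Q) :
      Step (.app (.lam x P) Q) (P.subst x Q)
  | appL {M M' N : Term} (h : Step M M') : Step (.app M N) (.app M' N)
  | appR {M N N' : Term} (h : Step N N') : Step (.app M N) (.app M N')
  | lam {x : ℕ} {M M' : Term} (h : Step M M') : Step (.lam x M) (.lam x M')

/-- `StepAt n d N x P q` : the subject of the deduction `d` contains a redex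
`(λx.P)Q` lying at depth `n` of `d`, whose contraction turns the subject of `d`
into `N`; `q` is the subdeduction of `d` typing the argument `Q` of the redex. -/
inductive StepAt :
    ℕ → {Γ Δ : Ctx} → {E : PCtx} → {M : Term} → {A : Ty} →
      Deduction Γ Δ E M A → Term → ℕ → Term → Ded → Prop where
  | redexArr {ΓM ΔM ΓN ΔN : Ctx} {EM EN : PCtx} {x : ℕ} {P Q : Term} {A B : Ty}
      (hA : ∀ C, A ≠ Ty.bang C) (hΓ : Disjoint (dom ΓM) (dom ΓN))
      (hΔ : Disjoint (dom ΔM) (dom ΔN))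
      (d1 : Deduction ΓM ΔM EM (.lam x P) (.arr A B))
      (d2 : Deduction ΓN ΔN EN Q A) (hok : BetaOk x P Q) :
      StepAt 0 (Deduction.arrE hA hΓ hΔ d1 d2) (P.subst x Q) x P (Ded.mk _ _ _ _ _ d2)
  | redexArrBang {ΓM ΔM ΓN ΔN : Ctx} {EM EN : PCtx} {x : ℕ} {P Q : Term} {A B : Ty}
      (hEM : ∀ p ∈ EM, p.1 = (∅ : Ctx)) (hΓ : Disjoint (dom ΓM) (dom ΓN))
      (hΔ : Disjoint (dom ΔM) (dom ΔN))
      (d1 : Deduction ΓM ΔM EM (.lam x P) (.arr (.bang A) B))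
      (d2 : Deduction ΓN ΔN EN Q (.bang A)) (hok : BetaOk x P Q) :
      StepAt 0 (Deduction.arrEBang hEM hΓ hΔ d1 d2) (P.subst x Q) x P (Ded.mk _ _ _ _ _ d2)
  | redexEarr {ΓM Δ : Ctx} {EM EN : PCtx} {Θ : Ctx} {x : ℕ} {P Q : Term} {A B : Ty}
      (hEN : EN ⊆ {(Θ, (∅ : Ctx))})
      (d1 : Deduction ΓM Δ EM (.lam x P) (.earr A B))
      (d2 : Deduction ∅ ∅ EN Q (.par A)) (hok : BetaOk x P Q) :
      StepAt 0 (Deduction.earrE hEN d1 d2) (P.subst x Q) x P (Ded.mk _ _ _ _ _ d2)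
  | congContr {n : ℕ} {Γ Δ : Ctx} {E : PCtx} {Θx Θy : Ctx} {x y z : ℕ} {A : Ty}
      {M : Term} {B : Ty} {N : Term} {x' : ℕ} {P' : Term} {q : Ded}
      (h1 : (Θx, ({(x, A)} : Ctx)) ∉ insert (Θy, ({(y, A)} : Ctx)) E)
      (h2 : (Θy, ({(y, A)} : Ctx)) ∉ E)
      (prem : Deduction Γ Δ (insert (Θx, {(x, A)}) (insert (Θy, {(y, A)}) E)) M B)
      (hs : StepAt n prem N x' P' q) :
      StepAt n (Deduction.contr (z := z) h1 h2 prem)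
        ((N.subst x (.var z)).subst y (.var z)) x' P' q
  | congArrI {n : ℕ} {Γ Δ : Ctx} {E : PCtx} {x : ℕ} {L : Ty} {M : Term} {B : Ty}
      {N : Term} {x' : ℕ} {P' : Term} {q : Ded}
      (hL : L.Linear) (hx : x ∉ dom Γ)
      (prem : Deduction (insert (x, L) Γ) Δ E M B)
      (hs : StepAt n prem N x' P' q) :
      StepAt n (Deduction.arrI hL hx prem) (.lam x N) x' P' q
  | congArrIPar {n : ℕ} {Γ Δ : Ctx} {E : PCtx} {x : ℕ} {A : Ty} {M : Term} {B : Ty}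
      {N : Term} {x' : ℕ} {P' : Term} {q : Ded}
      (hx : x ∉ dom Δ)
      (prem : Deduction Γ (insert (x, A) Δ) E M B)
      (hs : StepAt n prem N x' P' q) :
      StepAt n (Deduction.arrIPar hx prem) (.lam x N) x' P' q
  | congArrIBang {n : ℕ} {Γ Δ : Ctx} {E : PCtx} {Θ : Ctx} {x : ℕ} {A : Ty}
      {M : Term} {B : Ty} {N : Term} {x' : ℕ} {P' : Term} {q : Ded}
      (hmem : (Θ, ({(x, A)} : Ctx)) ∉ E)
      (prem : Deduction Γ Δ (insert (Θ, {(x, A)}) E) M B)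
      (hs : StepAt n prem N x' P' q) :
      StepAt n (Deduction.arrIBang hmem prem) (.lam x N) x' P' q
  | congEarrI {n : ℕ} {Γ Δ : Ctx} {E : PCtx} {Θ : Ctx} {x : ℕ} {A : Ty}
      {M : Term} {B : Ty} {N : Term} {x' : ℕ} {P' : Term} {q : Ded}
      (hmem : (insert (x, A) Θ, (∅ : Ctx)) ∉ E)
      (prem : Deduction Γ Δ (insert (insert (x, A) Θ, (∅ : Ctx)) E) M B)
      (hs : StepAt n prem N x' P' q) :
      StepAt n (Deduction.earrI hmem prem) (.lam x N) x' P' q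
  | congArrEL {n : ℕ} {ΓM ΔM ΓN ΔN : Ctx} {EM EN : PCtx} {M N : Term} {A B : Ty}
      {M' : Term} {x' : ℕ} {P' : Term} {q : Ded}
      (hA : ∀ C, A ≠ Ty.bang C)
      (hΓ : Disjoint (dom ΓM) (dom ΓN)) (hΔ : Disjoint (dom ΔM) (dom ΔN))
      (d1 : Deduction ΓM ΔM EM M (.arr A B)) (d2 : Deduction ΓN ΔN EN N A)
      (hs : StepAt n d1 M' x' P' q) :
      StepAt n (Deduction.arrE hA hΓ hΔ d1 d2) (.app M' N) x' P' q
  | congArrER {n : ℕ} {ΓM ΔM ΓN ΔN : Ctx} {EM EN : PCtx} {M N : Term} {A B : Ty}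
      {N' : Term} {x' : ℕ} {P' : Term} {q : Ded}
      (hA : ∀ C, A ≠ Ty.bang C)
      (hΓ : Disjoint (dom ΓM) (dom ΓN)) (hΔ : Disjoint (dom ΔM) (dom ΔN))
      (d1 : Deduction ΓM ΔM EM M (.arr A B)) (d2 : Deduction ΓN ΔN EN N A)
      (hs : StepAt n d2 N' x' P' q) :
      StepAt n (Deduction.arrE hA hΓ hΔ d1 d2) (.app M N') x' P' q
  | congArrEBangL {n : ℕ} {ΓM ΔM ΓN ΔN : Ctx} {EM EN : PCtx} {M N : Term} {A B : Ty}
      {M' : Term} {x' : ℕ} {P' : Term} {q : Ded}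
      (hEM : ∀ p ∈ EM, p.1 = (∅ : Ctx))
      (hΓ : Disjoint (dom ΓM) (dom ΓN)) (hΔ : Disjoint (dom ΔM) (dom ΔN))
      (d1 : Deduction ΓM ΔM EM M (.arr (.bang A) B)) (d2 : Deduction ΓN ΔN EN N (.bang A))
      (hs : StepAt n d1 M' x' P' q) :
      StepAt n (Deduction.arrEBang hEM hΓ hΔ d1 d2) (.app M' N) x' P' q
  | congArrEBangR {n : ℕ} {ΓM ΔM ΓN ΔN : Ctx} {EM EN : PCtx} {M N : Term} {A B : Ty}
      {N' : Term} {x' : ℕ} {P' : Term} {q : Ded}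
      (hEM : ∀ p ∈ EM, p.1 = (∅ : Ctx))
      (hΓ : Disjoint (dom ΓM) (dom ΓN)) (hΔ : Disjoint (dom ΔM) (dom ΔN))
      (d1 : Deduction ΓM ΔM EM M (.arr (.bang A) B)) (d2 : Deduction ΓN ΔN EN N (.bang A))
      (hs : StepAt n d2 N' x' P' q) :
      StepAt n (Deduction.arrEBang hEM hΓ hΔ d1 d2) (.app M N') x' P' q
  | congEarrEL {n : ℕ} {ΓM Δ : Ctx} {EM EN : PCtx} {Θ : Ctx} {M N : Term} {A B : Ty}
      {M' : Term} {x' : ℕ} {P' : Term} {q : Ded}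
      (hEN : EN ⊆ {(Θ, (∅ : Ctx))})
      (d1 : Deduction ΓM Δ EM M (.earr A B)) (d2 : Deduction ∅ ∅ EN N (.par A))
      (hs : StepAt n d1 M' x' P' q) :
      StepAt n (Deduction.earrE hEN d1 d2) (.app M' N) x' P' q
  | congEarrER {n : ℕ} {ΓM Δ : Ctx} {EM EN : PCtx} {Θ : Ctx} {M N : Term} {A B : Ty}
      {N' : Term} {x' : ℕ} {P' : Term} {q : Ded}
      (hEN : EN ⊆ {(Θ, (∅ : Ctx))})
      (d1 : Deduction ΓM Δ EM M (.earr A B)) (d2 : Deduction ∅ ∅ EN N (.par A))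
      (hs : StepAt n d2 N' x' P' q) :
      StepAt n (Deduction.earrE hEN d1 d2) (.app M N') x' P' q
  | congBox {n : ℕ} {Γ Γ' Δ Δ' Θ' : Ctx} {E₂ : PCtx} {M : Term} {B : Ty}
      {N : Term} {x' : ℕ} {P' : Term} {q : Ded}
      (hcov : Γ ⊆ Δ ∪ E₂.biUnion (fun p => p.1 ∪ p.2))
      (hE₂ : ∀ p ∈ E₂, (p.1 ≠ (∅ : Ctx) ↔ p.2 = (∅ : Ctx)))
      (hΦ : ∀ p ∈ E₂, p.2.card ≤ 1)
      (prem : Deduction Γ Δ' {(Θ', (∅ : Ctx))} M B)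
      (hs : StepAt n prem N x' P' q) :
      StepAt (n + 1) (Deduction.box (Γ' := Γ') hcov hE₂ hΦ prem) N x' P' q
  | congBang {n : ℕ} {Γ Γ' Δ Θ' Θ Φ : Ctx} {M : Term} {B : Ty}
      {N : Term} {x' : ℕ} {P' : Term} {q : Ded}
      (hcov : Γ ⊆ Θ ∪ Φ) (hΦ : Φ.card ≤ 1)
      (hpoly : Θ ≠ ∅ → (dom Φ ∩ M.FV).Nonempty)
      (prem : Deduction Γ ∅ {(Θ', (∅ : Ctx))} M B)
      (hs : StepAt n prem N x' P' q) :
      StepAt (n + 1) (Deduction.bang (Γ' := Γ') (Δ := Δ) hcov hΦ hpoly prem) N x' P' q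
  | congAllI {n : ℕ} {Γ Δ : Ctx} {E : PCtx} {M : Term} {L : Ty} {a : ℕ}
      {N : Term} {x' : ℕ} {P' : Term} {q : Ded}
      (hL : L.Linear)
      (hfresh : (∀ p ∈ Γ, a ∉ Ty.ftv p.2) ∧ (∀ p ∈ Δ, a ∉ Ty.ftv p.2) ∧
        ∀ qq ∈ E, (∀ p ∈ qq.1, a ∉ Ty.ftv p.2) ∧ (∀ p ∈ qq.2, a ∉ Ty.ftv p.2))
      (prem : Deduction Γ Δ E M L)
      (hs : StepAt n prem N x' P' q) :
      StepAt n (Deduction.allI hL hfresh prem) N x' P' q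
  | congAllE {n : ℕ} {Γ Δ : Ctx} {E : PCtx} {M : Term} {a : ℕ} {L : Ty}
      {N : Term} {x' : ℕ} {P' : Term} {q : Ded}
      (L' : Ty) (hL' : L'.Linear)
      (prem : Deduction Γ Δ E M (.all a L))
      (hs : StepAt n prem N x' P' q) :
      StepAt n (Deduction.allE L' hL' prem) N x' P' q

/-- `M ⊳_n N` relative to the packaged deduction `D` (existentially over the
data of the contracted redex). -/
def StepAtAny (n : ℕ) (D : Ded) (N : Term) : Prop :=
  ∃ x P q, StepAt n D.ded N x P q

/-- `D` is in ⊳-normal form at depth `n`. -/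
def NormalAt (n : ℕ) (D : Ded) : Prop := ∀ N, ¬ StepAtAny n D N

/-! ### Rounds and canonical strategies -/

/-- A round at level `d` : a sequence of ⊳_d-steps, each step recording the
variable `x`, the body `P` and the subdeduction `q` typing the argument of the
contracted redex.  All judgments in the round share the contexts and the type
of the initial one (subject reduction). -/
structure Round (d : ℕ) : Type where
  len : ℕ
  ded : Fin (len + 1) → Ded
  x : Fin len → ℕ
  P : Fin len → Term
  q : Fin len → Ded
  sameCtx : ∀ i, (ded i).Γ = (ded 0).Γ ∧ (ded i).Δ = (ded 0).Δ ∧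
    (ded i).E = (ded 0).E ∧ (ded i).A = (ded 0).A
  step : ∀ i : Fin len,
    StepAt d (ded i.castSucc).ded ((ded i.succ).M) (x i) (P i) (q i)

/-- First deduction of a round. -/
def Round.first {d : ℕ} (R : Round d) : Ded := R.ded 0

/-- Last deduction of a round. -/
def Round.last {d : ℕ} (R : Round d) : Ded := R.ded (Fin.last R.len)

/-- A round is complete when its last term has no redex at level `d`. -/
def Round.Complete {d : ℕ} (R : Round d) : Prop := NormalAt d R.last

/-- The cost of a round, each step being charged quadratically in the size of
the term being reduced. -/
def Round.cost {d : ℕ} (R : Round d) : ℕ :=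
  ∑ j : Fin R.len, ((R.ded j.castSucc).M.size) ^ 2

/-- A canonical strategy from `start` : complete rounds at successive levels
`0, 1, …, d-1`. -/
structure CanStrat (start : Ded) (d : ℕ) : Type where
  D : Fin (d + 1) → Ded
  init : D 0 = start
  R : (i : Fin d) → Round i.val
  Rfirst : ∀ i, (R i).first = D i.castSucc
  Rlast : ∀ i, (R i).last = D i.succ
  Rcomplete : ∀ i, (R i).Complete

/-- A canonical strategy is complete when its final term is in ⊳-normal form. -/
def CanStrat.IsComplete {start : Ded} {d : ℕ} (S : CanStrat start d) : Prop :=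
  ∀ N, ¬ Step (S.D (Fin.last d)).M N

/-- Total number of ⊳-steps performed by a canonical strategy. -/
def CanStrat.steps {start : Ded} {d : ℕ} (S : CanStrat start d) : ℕ :=
  ∑ i : Fin d, (S.R i).len

/-- Total cost of a canonical strategy (quadratic cost per step). -/
def CanStrat.cost {start : Ded} {d : ℕ} (S : CanStrat start d) : ℕ :=
  ∑ i : Fin d, (S.R i).cost

/-! ### (Substitution) traces -/

/-- A trace: a set of sequences of deductions, each tagged by a (possibly
empty) set of polynomial variables. -/
abbrev Trace : Type := Set (Finset ℕ × List Ded)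

/-- An assignment of traces to (the subdeductions of) a deduction. -/
abbrev TraceAssign : Type := Ded → Trace

/-- A deduction ending in one of the modal rules `!`, `$`. -/
def ModalEnd (D : Ded) : Prop := endsInBang D.ded ∨ endsInPar D.ded

/-- Initial trace assignments: every subdeduction ending with a modal rule gets
(nonempty) singleton sequences consisting of itself; other subdeductions get
the empty trace. -/
def IsInitial (D0 : Ded) (ca : TraceAssign) : Prop :=
  ∀ D : Ded, Sub D D0 →
    (ModalEnd D → (ca D).Nonempty ∧ ∀ s ∈ ca D, s.2 = [D]) ∧
    (¬ ModalEnd D → ca D = ∅)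

/-- Stepwise transformation of trace assignments along one reduction step
whose contracted redex has argument subdeduction `q`: every sequence of the
new assignment either is a sequence of the old one, or is obtained by plugging
a sequence of the trace of `q` on top of a sequence of the old assignment. -/
def Evolves (Dold : Ded) (ca ca' : TraceAssign) (q : Ded) : Prop :=
  ∀ (P : Ded) (s : Finset ℕ × List Ded), s ∈ ca' P →
    (∃ P₀, Sub P₀ Dold ∧ s ∈ ca P₀) ∨
    (∃ P₀ s₁ s₂ Φ, Sub P₀ Dold ∧ (s.1, s₁) ∈ ca P₀ ∧ (Φ, s₂) ∈ ca q ∧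
      s.2 = s₁ ++ s₂)

/-! ### Auxiliary lemmas for the proof of `value_modal_last_rule` -/

lemma dom_insert' (x : ℕ) (A : Ty) (Γ : Ctx) :
    dom (insert (x, A) Γ) = insert x (dom Γ) := Finset.image_insert _ _ _

lemma dom_union' (Γ Δ : Ctx) : dom (Γ ∪ Δ) = dom Γ ∪ dom Δ :=
  Finset.image_union _ _

lemma dom_parc' (Γ : Ctx) : dom (parc Γ) = dom Γ := by
  simp only [dom, parc, Finset.image_image]
  exact Finset.image_congr fun p _ => rfl

lemma dom_singleton' (x : ℕ) (A : Ty) : dom ({(x, A)} : Ctx) = {x} := by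
  simp [dom]

lemma dom_empty' : dom (∅ : Ctx) = ∅ := rfl

lemma domE_insert' (p : Ctx × Ctx) (E : PCtx) :
    domE (insert p E) = (dom p.1 ∪ dom p.2) ∪ domE E := by
  simp [domE, Finset.biUnion_insert]

lemma domE_singleton' (p : Ctx × Ctx) : domE {p} = dom p.1 ∪ dom p.2 := by
  simp [domE]

lemma mem_domE_of_mem {E : PCtx} {p : Ctx × Ctx} (hp : p ∈ E) {a : ℕ}
    (ha : a ∈ dom p.1 ∪ dom p.2) : a ∈ domE E :=
  Finset.mem_biUnion.2 ⟨p, hp, ha⟩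

lemma domE_pmerge_left (E F : PCtx) : domE E ⊆ domE (pmerge E F) := by
  intro a ha
  obtain ⟨p, hp, hap⟩ := Finset.mem_biUnion.1 ha
  by_cases h : ∃ q ∈ F, p.2 = q.2
  · obtain ⟨q, hq, hqp⟩ := h
    refine mem_domE_of_mem (p := (p.1 ∪ q.1, p.2)) ?_ ?_
    · refine Finset.mem_union_left _ (Finset.mem_union_left _ ?_)
      exact Finset.mem_image.2
        ⟨(p, q), Finset.mem_filter.2 ⟨Finset.mem_product.2 ⟨hp, hq⟩, hqp⟩, rfl⟩
    · rcases Finset.mem_union.1 hap with h1 | h1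
      · exact Finset.mem_union_left _
          (by rw [dom_union']; exact Finset.mem_union_left _ h1)
      · exact Finset.mem_union_right _ h1
  · push_neg at h
    refine mem_domE_of_mem (p := p) ?_ hap
    exact Finset.mem_union_left _ (Finset.mem_union_right _
      (Finset.mem_filter.2 ⟨hp, fun q hq => (h q hq).symm⟩))

lemma domE_pmerge_right (E F : PCtx) : domE F ⊆ domE (pmerge E F) := by
  intro a ha
  obtain ⟨q, hq, haq⟩ := Finset.mem_biUnion.1 ha
  by_cases h : ∃ p ∈ E, p.2 = q.2
  · obtain ⟨p, hp, hpq⟩ := h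
    refine mem_domE_of_mem (p := (p.1 ∪ q.1, p.2)) ?_ ?_
    · refine Finset.mem_union_left _ (Finset.mem_union_left _ ?_)
      exact Finset.mem_image.2
        ⟨(p, q), Finset.mem_filter.2 ⟨Finset.mem_product.2 ⟨hp, hq⟩, hpq⟩, rfl⟩
    · rcases Finset.mem_union.1 haq with h1 | h1
      · exact Finset.mem_union_left _
          (by rw [dom_union']; exact Finset.mem_union_right _ h1)
      · exact Finset.mem_union_right _ (hpq ▸ h1)
  · push_neg at h
    refine mem_domE_of_mem (p := q) ?_ haq
    exact Finset.mem_union_right _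
      (Finset.mem_filter.2 ⟨hq, fun p hp => h p hp⟩)

lemma mem_pmerge_pair {a0 Θ Φ : Ctx} {r : Ctx × Ctx}
    (h : r ∈ pmerge {(a0, (∅ : Ctx))} {(Θ, Φ)}) : r.2 = (∅ : Ctx) ∨ r = (Θ, Φ) := by
  rcases Finset.mem_union.1 h with h | h
  · rcases Finset.mem_union.1 h with h | h
    · obtain ⟨pq, hpq, hEq⟩ := Finset.mem_image.1 h
      have h1 := (Finset.mem_filter.1 hpq).1
      have h2 : pq.1 = (a0, (∅ : Ctx)) :=
        Finset.mem_singleton.1 (Finset.mem_product.1 h1).1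
      left
      rw [← hEq]
      simp [h2]
    · left
      have := Finset.mem_singleton.1 (Finset.mem_filter.1 h).1
      rw [this]
  · right
    exact Finset.mem_singleton.1 (Finset.mem_filter.1 h).1

lemma insert_pair_ne_pmerge {a0 Θ Φ Θx Θy : Ctx} {x y : ℕ} {A : Ty} {E0 : PCtx}
    (h1 : (Θx, ({(x, A)} : Ctx)) ∉ insert (Θy, ({(y, A)} : Ctx)) E0)
    (hE : insert (Θx, ({(x, A)} : Ctx)) (insert (Θy, ({(y, A)} : Ctx)) E0) =
      pmerge {(a0, (∅ : Ctx))} {(Θ, Φ)}) : False := by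
  have hp : (Θx, ({(x, A)} : Ctx)) ∈ pmerge {(a0, (∅ : Ctx))} {(Θ, Φ)} := by
    rw [← hE]; exact Finset.mem_insert_self _ _
  have hq : (Θy, ({(y, A)} : Ctx)) ∈ pmerge {(a0, (∅ : Ctx))} {(Θ, Φ)} := by
    rw [← hE]; exact Finset.mem_insert_of_mem (Finset.mem_insert_self _ _)
  rcases mem_pmerge_pair hp with h | h
  · exact Finset.singleton_ne_empty _ h
  rcases mem_pmerge_pair hq with h' | h'
  · exact Finset.singleton_ne_empty _ h'
  exact h1 (by rw [h, ← h']; exact Finset.mem_insert_self _ _)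

lemma dom_subset_of_cov {Γ Δ : Ctx} {E : PCtx}
    (hcov : Γ ⊆ Δ ∪ E.biUnion (fun p => p.1 ∪ p.2)) :
    dom Γ ⊆ dom Δ ∪ domE E := by
  intro a ha
  obtain ⟨pr, hpr, rfl⟩ := Finset.mem_image.1 ha
  rcases Finset.mem_union.1 (hcov hpr) with h | h
  · exact Finset.mem_union_left _ (Finset.mem_image.2 ⟨pr, h, rfl⟩)
  · obtain ⟨p, hp, hpr'⟩ := Finset.mem_biUnion.1 h
    refine Finset.mem_union_right _ (mem_domE_of_mem hp ?_)
    rcases Finset.mem_union.1 hpr' with h' | h'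
    · exact Finset.mem_union_left _ (Finset.mem_image.2 ⟨pr, h', rfl⟩)
    · exact Finset.mem_union_right _ (Finset.mem_image.2 ⟨pr, h', rfl⟩)

lemma dom_mono {Γ Δ : Ctx} (h : Γ ⊆ Δ) : dom Γ ⊆ dom Δ :=
  Finset.image_subset_image h

lemma mem_FV_subst {M N : Term} {x a : ℕ} (h : a ∈ (M.subst x N).FV) :
    a ∈ N.FV ∨ (a ∈ M.FV ∧ a ≠ x) := by
  induction M with
  | var y =>
    by_cases hy : y = x
    · simp [Term.subst, hy] at h; exact Or.inl h
    · simp [Term.subst, hy, Term.FV] at h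
      subst h; exact Or.inr ⟨by simp [Term.FV], hy⟩
  | lam y M ih =>
    by_cases hy : y = x
    · subst hy
      simp only [Term.subst, if_pos rfl, if_true, Term.FV, Finset.mem_erase] at h
      refine Or.inr ⟨?_, h.1⟩
      simp only [Term.FV, Finset.mem_erase]
      exact h
    · simp only [Term.subst, if_neg hy, Term.FV, Finset.mem_erase] at h
      rcases ih h.2 with h' | ⟨hm, hax⟩
      · exact Or.inl h'
      · exact Or.inr ⟨by simp [Term.FV, Finset.mem_erase]; exact ⟨h.1, hm⟩, hax⟩
  | app M P ihM ihP =>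
    simp only [Term.subst, Term.FV, Finset.mem_union] at h ⊢
    rcases h with h | h
    · rcases ihM h with h' | ⟨hm, hax⟩
      · exact Or.inl h'
      · exact Or.inr ⟨Or.inl hm, hax⟩
    · rcases ihP h with h' | ⟨hm, hax⟩
      · exact Or.inl h'
      · exact Or.inr ⟨Or.inr hm, hax⟩

lemma isValue_subst_var {M : Term} {x z : ℕ}
    (h : (M.subst x (Term.var z)).IsValue) : M.IsValue := by
  cases M with
  | var y => trivial
  | lam y M => trivial
  | app M P => exact h.elim

lemma tsubst_linear {L L' : Ty} {a : ℕ} (h : L.Linear) (h' : L'.Linear) :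
    (L.tsubst a L').Linear := by
  induction L with
  | tvar b =>
    simp only [Ty.tsubst]
    split
    · exact h'
    · trivial
  | arr B C ihB ihC => trivial
  | earr B C ihB ihC => trivial
  | bang B ih => exact h.elim
  | par B ih => exact h.elim
  | all b L2 ih =>
    simp only [Ty.tsubst]
    split
    · exact h
    · exact ih h

/-- The subject of the conclusion of the contraction rule is a value iff the
subject of its premise is. -/
lemma isValue_contr_subject {M : Term} {x y z : ℕ}
    (h : ((M.subst x (Term.var z)).subst y (Term.var z)).IsValue) : M.IsValue :=
  isValue_subst_var (isValue_subst_var h)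

/-- Any value of universally quantified type has a linear matrix. -/
lemma value_all_linear {Γ Δ : Ctx} {E : PCtx} {M : Term} {C : Ty}
    (d : Deduction Γ Δ E M C) :
    M.IsValue → ∀ a L, C = .all a L → L.Linear := by
  induction d with
  | ax hL =>
    intro _ a L hEq; subst hEq; exact hL
  | contr h1 h2 prem ih =>
    intro hv a L hEq
    exact ih (isValue_contr_subject hv) a L hEq
  | arrI hL hx prem ih => intro _ a L hEq; exact Ty.noConfusion hEq
  | arrIPar hx prem ih => intro _ a L hEq; exact Ty.noConfusion hEq
  | arrE hA hΓ hΔ d1 d2 ih1 ih2 => intro hv; exact hv.elim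
  | arrIBang hmem prem ih => intro _ a L hEq; exact Ty.noConfusion hEq
  | arrEBang hEM hΓ hΔ d1 d2 ih1 ih2 => intro hv; exact hv.elim
  | earrI hmem prem ih => intro _ a L hEq; exact Ty.noConfusion hEq
  | earrE hEN d1 d2 ih1 ih2 => intro hv; exact hv.elim
  | box hcov hE₂ hΦ prem ih => intro _ a L hEq; exact Ty.noConfusion hEq
  | bang hcov hΦ hpoly prem ih => intro _ a L hEq; exact Ty.noConfusion hEq
  | allI hL hfresh prem ih =>
    intro _ a L hEq
    injection hEq with _ h2
    subst h2; exact hL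
  | @allE Γ Δ E M a0 L0 L' hL' prem ih =>
    intro hv a L hEq
    have hlin : L0.Linear := ih hv a0 L0 rfl
    cases L0 with
    | tvar b =>
      simp only [Ty.tsubst] at hEq
      split at hEq
      · subst hEq; exact hL'
      · exact Ty.noConfusion hEq
    | arr B C => exact Ty.noConfusion hEq
    | earr B C => exact Ty.noConfusion hEq
    | bang B => exact hlin.elim
    | par B => exact hlin.elim
    | all b L2 =>
      simp only [Ty.tsubst] at hEq
      split at hEq
      · injection hEq with _ h2; subst h2; exact hlin
      · injection hEq with _ h2; subst h2; exact tsubst_linear hlin hL'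

/-- A deduction ending in the rule `!` has a pmerge-shaped `E`. -/
lemma endsInBang_shape {Γ Δ : Ctx} {E : PCtx} {M : Term} {B : Ty}
    (d : Deduction Γ Δ E M B) (h : endsInBang d) :
    ∃ a0 Θ Φ : Ctx, E = pmerge {(a0, (∅ : Ctx))} {(Θ, Φ)} := by
  cases d with
  | bang hcov hΦ hpoly prem => exact ⟨_, _, _, rfl⟩
  | ax hL => exact h.elim
  | contr h1 h2 prem => exact h.elim
  | arrI hL hx prem => exact h.elim
  | arrIPar hx prem => exact h.elim
  | arrE hA hΓ hΔ d1 d2 => exact h.elim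
  | arrIBang hmem prem => exact h.elim
  | arrEBang hEM hΓ hΔ d1 d2 => exact h.elim
  | earrI hmem prem => exact h.elim
  | earrE hEN d1 d2 => exact h.elim
  | box hcov hE₂ hΦ prem => exact h.elim
  | allI hL hfresh prem => exact h.elim
  | allE L' hL' prem => exact h.elim

/-- Free variables of a typed term lie in the domains of the contexts. -/
lemma fv_sub {Γ Δ : Ctx} {E : PCtx} {M : Term} {B : Ty}
    (d : Deduction Γ Δ E M B) : M.FV ⊆ dom Γ ∪ dom Δ ∪ domE E := by
  induction d with
  | @ax Γ Δ E x L hL =>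
    intro a ha
    simp only [Term.FV, Finset.mem_singleton] at ha
    subst ha
    exact Finset.mem_union_left _ (Finset.mem_union_left _
      (by rw [dom_insert']; exact Finset.mem_insert_self _ _))
  | @contr Γ Δ E Θx Θy x y z A M B h1 h2 prem ih =>
    intro a ha
    have hz : a = z → a ∈ domE (pmerge E {(Θx ∪ Θy, {(z, A)})}) := by
      intro hz; subst hz
      apply domE_pmerge_right
      rw [domE_singleton', dom_singleton']
      exact Finset.mem_union_right _ (Finset.mem_singleton_self _)
    rcases mem_FV_subst ha with h | ⟨ha1, hay⟩
    · simp only [Term.FV, Finset.mem_singleton] at h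
      exact Finset.mem_union_right _ (hz h)
    rcases mem_FV_subst ha1 with h | ⟨ha2, hax⟩
    · simp only [Term.FV, Finset.mem_singleton] at h
      exact Finset.mem_union_right _ (hz h)
    have := ih ha2
    rw [domE_insert', domE_insert'] at this
    simp only [Finset.mem_union, dom_singleton', Finset.mem_singleton] at this ⊢
    rcases this with (h | h) | ((h | h) | ((h | h) | h))
    · exact Or.inl (Or.inl h)
    · exact Or.inl (Or.inr h)
    · refine Or.inr (domE_pmerge_right _ _ ?_)
      rw [domE_singleton', dom_union']
      exact Finset.mem_union_left _ (Finset.mem_union_left _ h)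
    · exact (hax h).elim
    · refine Or.inr (domE_pmerge_right _ _ ?_)
      rw [domE_singleton', dom_union']
      exact Finset.mem_union_left _ (Finset.mem_union_right _ h)
    · exact (hay h).elim
    · exact Or.inr (domE_pmerge_left _ _ h)
  | @arrI Γ Δ E x L M B hL hx prem ih =>
    intro a ha
    simp only [Term.FV, Finset.mem_erase] at ha
    have := ih ha.2
    rw [dom_insert'] at this
    simp only [Finset.mem_union, Finset.mem_insert] at this ⊢
    rcases this with ((h | h) | h) | h
    · exact (ha.1 h).elim
    · exact Or.inl (Or.inl h)
    · exact Or.inl (Or.inr h)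
    · exact Or.inr h
  | @arrIPar Γ Δ E x A M B hx prem ih =>
    intro a ha
    simp only [Term.FV, Finset.mem_erase] at ha
    have := ih ha.2
    rw [dom_insert'] at this
    simp only [Finset.mem_union, Finset.mem_insert] at this ⊢
    rcases this with (h | (h | h)) | h
    · exact Or.inl (Or.inl h)
    · exact (ha.1 h).elim
    · exact Or.inl (Or.inr h)
    · exact Or.inr h
  | @arrE ΓM ΔM ΓN ΔN EM EN M N A B hA hΓ hΔ d1 d2 ih1 ih2 =>
    intro a ha
    simp only [Term.FV, Finset.mem_union] at ha
    rw [dom_union', dom_union']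
    simp only [Finset.mem_union]
    rcases ha with h | h
    · rcases Finset.mem_union.1 (ih1 h) with h' | h'
      · rcases Finset.mem_union.1 h' with h'' | h''
        · exact Or.inl (Or.inl (Or.inl h''))
        · exact Or.inl (Or.inr (Or.inl h''))
      · exact Or.inr (domE_pmerge_left _ _ h')
    · rcases Finset.mem_union.1 (ih2 h) with h' | h'
      · rcases Finset.mem_union.1 h' with h'' | h''
        · exact Or.inl (Or.inl (Or.inr h''))
        · exact Or.inl (Or.inr (Or.inr h''))
      · exact Or.inr (domE_pmerge_right _ _ h')
  | @arrIBang Γ Δ E Θ x A M B hmem prem ih =>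
    intro a ha
    simp only [Term.FV, Finset.mem_erase] at ha
    have := ih ha.2
    rw [domE_insert'] at this
    simp only [Finset.mem_union, dom_singleton', Finset.mem_singleton] at this ⊢
    rcases this with (h | h) | ((h | h) | h)
    · exact Or.inl (Or.inl h)
    · exact Or.inl (Or.inr h)
    · refine Or.inr (domE_pmerge_right _ _ ?_)
      rw [domE_singleton']
      exact Finset.mem_union_left _ h
    · exact (ha.1 h).elim
    · exact Or.inr (domE_pmerge_left _ _ h)
  | @earrI Γ Δ E Θ x A M B hmem prem ih =>
    intro a ha
    simp only [Term.FV, Finset.mem_erase] at ha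
    have := ih ha.2
    rw [domE_insert'] at this
    simp only [Finset.mem_union, dom_insert', Finset.mem_insert,
      dom_empty', Finset.notMem_empty, or_false] at this ⊢
    rcases this with (h | h) | (h | h)
    · exact Or.inl (Or.inl h)
    · exact Or.inl (Or.inr h)
    · rcases h with h | h
      · exact (ha.1 h).elim
      · refine Or.inr (domE_pmerge_right _ _ ?_)
        rw [domE_singleton']
        exact Finset.mem_union_left _ h
    · exact Or.inr (domE_pmerge_left _ _ h)
  | @arrEBang ΓM ΔM ΓN ΔN EM EN M N A B hEM hΓ hΔ d1 d2 ih1 ih2 =>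
    intro a ha
    simp only [Term.FV, Finset.mem_union] at ha
    rw [dom_union', dom_union']
    simp only [Finset.mem_union]
    rcases ha with h | h
    · rcases Finset.mem_union.1 (ih1 h) with h' | h'
      · rcases Finset.mem_union.1 h' with h'' | h''
        · exact Or.inl (Or.inl (Or.inl h''))
        · exact Or.inl (Or.inr (Or.inl h''))
      · exact Or.inr (domE_pmerge_left _ _ h')
    · rcases Finset.mem_union.1 (ih2 h) with h' | h'
      · rcases Finset.mem_union.1 h' with h'' | h''
        · exact Or.inl (Or.inl (Or.inr h''))
        · exact Or.inl (Or.inr (Or.inr h''))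
      · exact Or.inr (domE_pmerge_right _ _ h')
  | @earrE ΓM Δ EM EN Θ M N A B hEN d1 d2 ih1 ih2 =>
    intro a ha
    simp only [Term.FV, Finset.mem_union] at ha
    rcases ha with h | h
    · rcases Finset.mem_union.1 (ih1 h) with h' | h'
      · exact Finset.mem_union_left _ h'
      · exact Finset.mem_union_right _ (domE_pmerge_left _ _ h')
    · have := ih2 h
      simp only [dom_empty', Finset.empty_union, Finset.mem_union,
        Finset.notMem_empty, false_or] at this
      exact Finset.mem_union_right _ (domE_pmerge_right _ _ this)
  | @box Γ Γ' Δ Δ' Θ' E₂ M B hcov hE₂ hΦ prem ih =>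
    intro a ha
    have := ih ha
    rw [domE_singleton'] at this
    simp only [Finset.mem_union, dom_empty', Finset.notMem_empty, or_false] at this
    rcases this with (h | h) | h
    · rcases Finset.mem_union.1 (dom_subset_of_cov hcov h) with h' | h'
      · refine Finset.mem_union_left _ (Finset.mem_union_right _ ?_)
        rw [dom_union']
        exact Finset.mem_union_right _ h'
      · exact Finset.mem_union_right _ (domE_pmerge_right _ _ h')
    · refine Finset.mem_union_left _ (Finset.mem_union_right _ ?_)
      rw [dom_union', dom_parc']
      exact Finset.mem_union_left _ h
    · refine Finset.mem_union_right _ (domE_pmerge_left _ _ ?_)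
      rw [domE_singleton', dom_parc']
      exact Finset.mem_union_left _ h
  | @bang Γ Γ' Δ Θ' Θ Φ M B hcov hΦ hpoly prem ih =>
    intro a ha
    have := ih ha
    rw [domE_singleton'] at this
    simp only [Finset.mem_union, dom_empty', Finset.notMem_empty, or_false] at this
    rcases this with h | h
    · refine Finset.mem_union_right _ (domE_pmerge_right _ _ ?_)
      rw [domE_singleton']
      have := dom_mono hcov h
      rw [dom_union'] at this
      exact this
    · refine Finset.mem_union_right _ (domE_pmerge_left _ _ ?_)
      rw [domE_singleton', dom_parc']
      exact Finset.mem_union_left _ h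
  | allI hL hfresh prem ih => exact ih
  | allE L' hL' prem ih => exact ih

/-- **Structural properties, points 8 and 9** : let `Π` derive `Γ;Δ;E ⊢ M:B`
with `M` a value.
(1) If `B = !A` then the last rule of `Π` is `!` and `FV(M) ⊆ dom(E)`.
(2) If `B = $A` then the last rule of `Π` is `$` or `C`, and
`FV(M) ⊆ dom(Δ) ∪ dom(E)`. -/
theorem value_modal_last_rule
    {Γ Δ : Ctx} {E : PCtx} {M : Term} {B : Ty} (d : Deduction Γ Δ E M B)
    (hval : M.IsValue) :
    (∀ A : Ty, B = .bang A → endsInBang d ∧ M.FV ⊆ domE E) ∧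
    (∀ A : Ty, B = .par A →
      (endsInPar d ∨ endsInContr d) ∧ M.FV ⊆ dom Δ ∪ domE E) := by
  revert hval
  induction d with
  | @ax Γ Δ E x L hL =>
    intro _
    constructor
    · intro A hEq; subst hEq; exact hL.elim
    · intro A hEq; subst hEq; exact hL.elim
  | @contr Γ Δ E Θx Θy x y z A0 M B h1 h2 prem ih =>
    intro hv
    have hvM : M.IsValue := isValue_contr_subject hv
    constructor
    · intro A hEq
      obtain ⟨hbang, _⟩ := (ih hvM).1 A hEq
      obtain ⟨a0, Θ, Φ, hE⟩ := endsInBang_shape prem hbang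
      exact (insert_pair_ne_pmerge h1 hE).elim
    · intro A hEq
      obtain ⟨_, hsub⟩ := (ih hvM).2 A hEq
      refine ⟨Or.inr trivial, ?_⟩
      intro a ha
      have hz : a = z → a ∈ domE (pmerge E {(Θx ∪ Θy, {(z, A0)})}) := by
        intro hz; subst hz
        apply domE_pmerge_right
        rw [domE_singleton', dom_singleton']
        exact Finset.mem_union_right _ (Finset.mem_singleton_self _)
      rcases mem_FV_subst ha with h | ⟨ha1, hay⟩
      · simp only [Term.FV, Finset.mem_singleton] at h
        exact Finset.mem_union_right _ (hz h)
      rcases mem_FV_subst ha1 with h | ⟨ha2, hax⟩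
      · simp only [Term.FV, Finset.mem_singleton] at h
        exact Finset.mem_union_right _ (hz h)
      have := hsub ha2
      rw [domE_insert', domE_insert'] at this
      simp only [Finset.mem_union, dom_singleton', Finset.mem_singleton] at this ⊢
      rcases this with h | ((h | h) | ((h | h) | h))
      · exact Or.inl h
      · refine Or.inr (domE_pmerge_right _ _ ?_)
        rw [domE_singleton', dom_union']
        exact Finset.mem_union_left _ (Finset.mem_union_left _ h)
      · exact (hax h).elim
      · refine Or.inr (domE_pmerge_right _ _ ?_)
        rw [domE_singleton', dom_union']
        exact Finset.mem_union_left _ (Finset.mem_union_right _ h)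
      · exact (hay h).elim
      · exact Or.inr (domE_pmerge_left _ _ h)
  | arrI hL hx prem ih =>
    exact fun _ => ⟨fun A h => Ty.noConfusion h, fun A h => Ty.noConfusion h⟩
  | arrIPar hx prem ih =>
    exact fun _ => ⟨fun A h => Ty.noConfusion h, fun A h => Ty.noConfusion h⟩
  | arrE hA hΓ hΔ d1 d2 ih1 ih2 => exact fun hv => hv.elim
  | arrIBang hmem prem ih =>
    exact fun _ => ⟨fun A h => Ty.noConfusion h, fun A h => Ty.noConfusion h⟩
  | arrEBang hEM hΓ hΔ d1 d2 ih1 ih2 => exact fun hv => hv.elim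
  | earrI hmem prem ih =>
    exact fun _ => ⟨fun A h => Ty.noConfusion h, fun A h => Ty.noConfusion h⟩
  | earrE hEN d1 d2 ih1 ih2 => exact fun hv => hv.elim
  | @box Γ Γ' Δ Δ' Θ' E₂ M B hcov hE₂ hΦ prem ih =>
    intro _
    constructor
    · intro A hEq; exact Ty.noConfusion hEq
    · intro A hEq
      refine ⟨Or.inl trivial, ?_⟩
      intro a ha
      have := fv_sub prem ha
      rw [domE_singleton'] at this
      simp only [Finset.mem_union, dom_empty', Finset.notMem_empty, or_false] at this
      rcases this with (h | h) | h
      · rcases Finset.mem_union.1 (dom_subset_of_cov hcov h) with h' | h'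
        · refine Finset.mem_union_left _ ?_
          rw [dom_union']
          exact Finset.mem_union_right _ h'
        · exact Finset.mem_union_right _ (domE_pmerge_right _ _ h')
      · refine Finset.mem_union_left _ ?_
        rw [dom_union', dom_parc']
        exact Finset.mem_union_left _ h
      · refine Finset.mem_union_right _ (domE_pmerge_left _ _ ?_)
        rw [domE_singleton', dom_parc']
        exact Finset.mem_union_left _ h
  | @bang Γ Γ' Δ Θ' Θ Φ M B hcov hΦ hpoly prem ih =>
    intro _
    constructor
    · intro A hEq
      refine ⟨trivial, ?_⟩
      intro a ha
      have := fv_sub prem ha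
      rw [domE_singleton'] at this
      simp only [Finset.mem_union, dom_empty', Finset.notMem_empty, or_false] at this
      rcases this with h | h
      · refine domE_pmerge_right _ _ ?_
        rw [domE_singleton']
        have := dom_mono hcov h
        rw [dom_union'] at this
        exact this
      · refine domE_pmerge_left _ _ ?_
        rw [domE_singleton', dom_parc']
        exact Finset.mem_union_left _ h
    · intro A hEq; exact Ty.noConfusion hEq
  | allI hL hfresh prem ih =>
    exact fun _ => ⟨fun A h => Ty.noConfusion h, fun A h => Ty.noConfusion h⟩
  | @allE Γ Δ E M a0 L0 L' hL' prem ih =>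
    intro hv
    have hlin : L0.Linear := value_all_linear prem hv a0 L0 rfl
    constructor
    · intro A hEq
      exfalso
      cases L0 with
      | tvar b =>
        simp only [Ty.tsubst] at hEq
        split at hEq
        · subst hEq; exact hL'
        · exact Ty.noConfusion hEq
      | arr B C => exact Ty.noConfusion hEq
      | earr B C => exact Ty.noConfusion hEq
      | bang B => exact hlin
      | par B => exact hlin
      | all b L2 =>
        simp only [Ty.tsubst] at hEq
        split at hEq <;> exact Ty.noConfusion hEq
    · intro A hEq
      exfalso
      cases L0 with
      | tvar b =>
        simp only [Ty.tsubst] at hEq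
        split at hEq
        · subst hEq; exact hL'
        · exact Ty.noConfusion hEq
      | arr B C => exact Ty.noConfusion hEq
      | earr B C => exact Ty.noConfusion hEq
      | bang B => exact hlin
      | par B => exact hlin
      | all b L2 =>
        simp only [Ty.tsubst] at hEq
        split at hEq <;> exact Ty.noConfusion hEq

end WALT
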